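/- For all complex numbers t, f, g, a, b with f ≠ 0, the function ε ↦ 2√2·ε·F_V(1+√2·εt, εf/√2, g/2, 1/(2ε⁴), b/4, −1/ε⁴, a/ε² − 1/(2ε⁴)) tends to F_IV(t,f,g,a,b) = g²/(2f) + (3/2)f³ + 4tf² + 2(t²−a)f + b/f as ε → 0 along nonzero complex values of ε (punctured neighborhood filter of 0 in ℂ). -/

import Mathlib

/-- Right-hand side of the fifth Painlevé equation:
`F_V(x,u,v,α,β,γ,δ) = (1/(2u) + 1/(u−1))v² − v/x + ((u−1)²/x²)(αu + β/u) + γu/x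
  + δ·u(u+1)/(u−1)`. -/
noncomputable def FV (x u v α β γ δ : ℂ) : ℂ :=
  (1 / (2 * u) + 1 / (u - 1)) * v ^ 2 - v / x
    + ((u - 1) ^ 2 / x ^ 2) * (α * u + β / u) + γ * u / x + δ * u * (u + 1) / (u - 1)

/-- Right-hand side of the fourth Painlevé equation. -/
noncomputable def FIV (x u v α β : ℂ) : ℂ :=
  v ^ 2 / (2 * u) + (3 / 2) * u ^ 3 + 4 * x * u ^ 2 + 2 * (x ^ 2 - α) * u + β / u

noncomputable def Gfun (s t f g a b ε : ℂ) : ℂ :=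
  s ^ 2 * g ^ 2 / (4 * f) + s ^ 2 * ε * g ^ 2 / (2 * (ε * f - s)) - s * ε * g / (1 + s * ε * t)
    + ((-6 * s * f ^ 4 + 4 * a * s ^ 3 * f ^ 2 - 8 * s ^ 3 * t * f ^ 3 - s ^ 5 * b
          - 2 * s ^ 5 * t ^ 2 * f ^ 2)
        + (2 * f ^ 5 + 4 * a * s ^ 2 * f ^ 3 + 3 * s ^ 4 * f * b + 8 * a * s ^ 4 * t * f ^ 2
          - 2 * s ^ 4 * t ^ 2 * f ^ 3) * ε
        + (-3 * s ^ 3 * f ^ 2 * b + 8 * a * s ^ 3 * t * f ^ 3 + 4 * a * s ^ 5 * t ^ 2 * f ^ 2)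
          * ε ^ 2
        + (s ^ 2 * f ^ 3 * b + 4 * a * s ^ 4 * t ^ 2 * f ^ 3) * ε ^ 3)
      / (2 * s ^ 2 * f * (1 + s * ε * t) ^ 2 * (ε * f - s))

set_option maxHeartbeats 1000000 in
lemma FV_eq' (x p q v α β γ δ : ℂ) (hx : x ≠ 0) (hp : p ≠ 0) (hq : q ≠ 0)
    (hpq : p - q ≠ 0) :
    FV x (p / q) v α β γ δ =
      ((3 * p - q) * q ^ 4 * v ^ 2 * x ^ 2 - 2 * p * (p - q) * q ^ 3 * v * x
          + 2 * (p - q) ^ 3 * (α * p ^ 2 + β * q ^ 2) + 2 * γ * p ^ 2 * (p - q) * q ^ 2 * x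
          + 2 * δ * p ^ 2 * (p + q) * q ^ 2 * x ^ 2)
        / (2 * p * (p - q) * q ^ 3 * x ^ 2) := by
  have h1 : p / q - 1 = (p - q) / q := by field_simp
  unfold FV
  rw [h1]
  field_simp
  have hD1 : 2 * p * (p - q) * x * (q ^ 2 * x ^ 2 * (q * p)) ≠ (0:ℂ) :=
    mul_ne_zero (mul_ne_zero (mul_ne_zero (mul_ne_zero two_ne_zero hp) hpq) hx)
      (mul_ne_zero (mul_ne_zero (pow_ne_zero 2 hq) (pow_ne_zero 2 hx)) (mul_ne_zero hq hp))
  have hD2 : 2 * p * (p - q) * q ^ 3 * x ^ 2 ≠ (0:ℂ) :=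
    mul_ne_zero (mul_ne_zero (mul_ne_zero (mul_ne_zero two_ne_zero hp) hpq) (pow_ne_zero 3 hq))
      (pow_ne_zero 2 hx)
  ring

set_option maxHeartbeats 2000000 in
lemma FV_spec (s ε t f g a b : ℂ) (hs : s ≠ 0) (hε : ε ≠ 0) (hf : f ≠ 0)
    (hx : 1 + s * ε * t ≠ 0) (hd : ε * f - s ≠ 0) :
    FV (1 + s * ε * t) (ε * f / s) (g / 2) (1 / (2 * ε ^ 4)) (b / 4) (-1 / ε ^ 4)
        (a / ε ^ 2 - 1 / (2 * ε ^ 4)) =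
      ((3 * (ε * f) - s) * s ^ 4 * g ^ 2 * ε ^ 4 * (1 + s * ε * t) ^ 2
          - 4 * ε ^ 4 * (ε * f) * (ε * f - s) * s ^ 3 * g * (1 + s * ε * t)
          + 2 * (ε * f - s) ^ 3 * (2 * (ε * f) ^ 2 + ε ^ 4 * b * s ^ 2)
          - 8 * (ε * f) ^ 2 * (ε * f - s) * s ^ 2 * (1 + s * ε * t)
          + 4 * (2 * a * ε ^ 2 - 1) * (ε * f) ^ 2 * (ε * f + s) * s ^ 2 * (1 + s * ε * t) ^ 2)
        / (8 * ε ^ 4 * (ε * f) * (ε * f - s) * s ^ 3 * (1 + s * ε * t) ^ 2) := by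
  have hp : ε * f ≠ 0 := mul_ne_zero hε hf
  rw [FV_eq' _ _ _ _ _ _ _ _ hx hp hs hd]
  have hD1 : 2 * (ε * f) * (ε * f - s) * s ^ 3 * (1 + s * ε * t) ^ 2 ≠ (0:ℂ) :=
    mul_ne_zero (mul_ne_zero (mul_ne_zero (mul_ne_zero two_ne_zero hp) hd) (pow_ne_zero 3 hs))
      (pow_ne_zero 2 hx)
  have hD2 : 8 * ε ^ 4 * (ε * f) * (ε * f - s) * s ^ 3 * (1 + s * ε * t) ^ 2 ≠ (0:ℂ) :=
    mul_ne_zero (mul_ne_zero (mul_ne_zero (mul_ne_zero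
      (mul_ne_zero (by norm_num) (pow_ne_zero 4 hε)) hp) hd) (pow_ne_zero 3 hs))
      (pow_ne_zero 2 hx)
  have hnum : (3 * (ε * f) - s) * s ^ 4 * (g / 2) ^ 2 * (1 + s * ε * t) ^ 2
        - 2 * (ε * f) * (ε * f - s) * s ^ 3 * (g / 2) * (1 + s * ε * t)
        + 2 * (ε * f - s) ^ 3 * (1 / (2 * ε ^ 4) * (ε * f) ^ 2 + b / 4 * s ^ 2)
        + 2 * (-1 / ε ^ 4) * (ε * f) ^ 2 * (ε * f - s) * s ^ 2 * (1 + s * ε * t)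
        + 2 * (a / ε ^ 2 - 1 / (2 * ε ^ 4)) * (ε * f) ^ 2 * (ε * f + s) * s ^ 2
          * (1 + s * ε * t) ^ 2 =
      ((3 * (ε * f) - s) * s ^ 4 * g ^ 2 * ε ^ 4 * (1 + s * ε * t) ^ 2
          - 4 * ε ^ 4 * (ε * f) * (ε * f - s) * s ^ 3 * g * (1 + s * ε * t)
          + 2 * (ε * f - s) ^ 3 * (2 * (ε * f) ^ 2 + ε ^ 4 * b * s ^ 2)
          - 8 * (ε * f) ^ 2 * (ε * f - s) * s ^ 2 * (1 + s * ε * t)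
          + 4 * (2 * a * ε ^ 2 - 1) * (ε * f) ^ 2 * (ε * f + s) * s ^ 2 * (1 + s * ε * t) ^ 2)
        / (4 * ε ^ 4) := by
    have hinv : ε * ε⁻¹ = 1 := mul_inv_cancel₀ hε
    linear_combination ((-2:ℂ)*s^2*ε^3*f^3*b + (-8:ℂ)*s^2*ε^3*f^3*a*ε⁻¹^2 + (-2:ℂ)*s^2*ε^4*f^3*b*ε⁻¹ + (-8:ℂ)*s^2*ε^4*f^3*a*ε⁻¹^3 + (-2:ℂ)*s^2*ε^5*f^3*b*ε⁻¹^2 + (-2:ℂ)*s^2*ε^6*f^3*b*ε⁻¹^3 + (6:ℂ)*s^3*ε^2*f^2*b + (-8:ℂ)*s^3*ε^2*f^2*a*ε⁻¹^2 + (4:ℂ)*s^3*ε^2*f^2*g + (6:ℂ)*s^3*ε^3*f^2*b*ε⁻¹ + (-8:ℂ)*s^3*ε^3*f^2*a*ε⁻¹^3 + (4:ℂ)*s^3*ε^3*f^2*g*ε⁻¹ + (6:ℂ)*s^3*ε^4*f^2*b*ε⁻¹^2 + (4:ℂ)*s^3*ε^4*f^2*g*ε⁻¹^2 + (-16:ℂ)*s^3*ε^4*t*f^3*a*ε⁻¹^2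 + (6:ℂ)*s^3*ε^5*f^2*b*ε⁻¹^3 + (4:ℂ)*s^3*ε^5*f^2*g*ε⁻¹^3 + (-16:ℂ)*s^3*ε^5*t*f^3*a*ε⁻¹^3 + (-6:ℂ)*s^4*ε*f*b + (-4:ℂ)*s^4*ε*f*g + (-3:ℂ)*s^4*ε*f*g^2 + (-6:ℂ)*s^4*ε^2*f*b*ε⁻¹ + (-4:ℂ)*s^4*ε^2*f*g*ε⁻¹ + (-3:ℂ)*s^4*ε^2*f*g^2*ε⁻¹ + (-6:ℂ)*s^4*ε^3*f*b*ε⁻¹^2 + (-4:ℂ)*s^4*ε^3*f*g*ε⁻¹^2 + (-3:ℂ)*s^4*ε^3*f*g^2*ε⁻¹^2 + (-16:ℂ)*s^4*ε^3*t*f^2*a*ε⁻¹^2 + (4:ℂ)*s^4*ε^3*t*f^2*g + (-6:ℂ)*s^4*ε^4*f*b*ε⁻¹^3 + (-4:ℂ)*s^4*ε^4*f*g*ε⁻¹^3 + (-3:ℂ)*s^4*ε^4*f*g^2*ε⁻¹^3 + (-16:ℂ)*s^4*ε^4*t*f^2*a*ε⁻¹^3 + (4:ℂ)*s^4*ε^4*t*f^2*g*ε⁻¹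 + (4:ℂ)*s^4*ε^5*t*f^2*g*ε⁻¹^2 + (-8:ℂ)*s^4*ε^5*t^2*f^3*a*ε⁻¹^2 + (4:ℂ)*s^4*ε^6*t*f^2*g*ε⁻¹^3 + (-8:ℂ)*s^4*ε^6*t^2*f^3*a*ε⁻¹^3 + (2:ℂ)*s^5*b + (1:ℂ)*s^5*g^2 + (2:ℂ)*s^5*ε*b*ε⁻¹ + (1:ℂ)*s^5*ε*g^2*ε⁻¹ + (2:ℂ)*s^5*ε^2*b*ε⁻¹^2 + (1:ℂ)*s^5*ε^2*g^2*ε⁻¹^2 + (-4:ℂ)*s^5*ε^2*t*f*g + (-6:ℂ)*s^5*ε^2*t*f*g^2 + (2:ℂ)*s^5*ε^3*b*ε⁻¹^3 + (1:ℂ)*s^5*ε^3*g^2*ε⁻¹^3 + (-4:ℂ)*s^5*ε^3*t*f*g*ε⁻¹ + (-6:ℂ)*s^5*ε^3*t*f*g^2*ε⁻¹ + (-4:ℂ)*s^5*ε^4*t*f*g*ε⁻¹^2 + (-6:ℂ)*s^5*ε^4*t*f*g^2*ε⁻¹^2 + (-8:ℂ)*s^5*ε^4*t^2*f^2*a*ε⁻¹^2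 + (-4:ℂ)*s^5*ε^5*t*f*g*ε⁻¹^3 + (-6:ℂ)*s^5*ε^5*t*f*g^2*ε⁻¹^3 + (-8:ℂ)*s^5*ε^5*t^2*f^2*a*ε⁻¹^3 + (2:ℂ)*s^6*ε*t*g^2 + (2:ℂ)*s^6*ε^2*t*g^2*ε⁻¹ + (2:ℂ)*s^6*ε^3*t*g^2*ε⁻¹^2 + (-3:ℂ)*s^6*ε^3*t^2*f*g^2 + (2:ℂ)*s^6*ε^4*t*g^2*ε⁻¹^3 + (-3:ℂ)*s^6*ε^4*t^2*f*g^2*ε⁻¹ + (-3:ℂ)*s^6*ε^5*t^2*f*g^2*ε⁻¹^2 + (-3:ℂ)*s^6*ε^6*t^2*f*g^2*ε⁻¹^3 + (1:ℂ)*s^7*ε^2*t^2*g^2 + (1:ℂ)*s^7*ε^3*t^2*g^2*ε⁻¹ + (1:ℂ)*s^7*ε^4*t^2*g^2*ε⁻¹^2 + (1:ℂ)*s^7*ε^5*t^2*g^2*ε⁻¹^3) * hinv / 4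
  rw [hnum, div_div,
    show (4 * ε ^ 4) * (2 * (ε * f) * (ε * f - s) * s ^ 3 * (1 + s * ε * t) ^ 2)
        = 8 * ε ^ 4 * (ε * f) * (ε * f - s) * s ^ 3 * (1 + s * ε * t) ^ 2 from by ring]

set_option maxHeartbeats 2000000 in
lemma Gfun_eq (s ε t f g a b : ℂ) (hs : s ≠ 0) (hf : f ≠ 0)
    (hx : 1 + s * ε * t ≠ 0) (hd : ε * f - s ≠ 0) :
    Gfun s t f g a b ε =
      (s ^ 4 * g ^ 2 * (1 + s * ε * t) ^ 2 * (ε * f - s)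
          + 2 * s ^ 4 * f * ε * g ^ 2 * (1 + s * ε * t) ^ 2
          - 4 * s ^ 3 * ε * f * g * (1 + s * ε * t) * (ε * f - s)
          + 2 * ((-6 * s * f ^ 4 + 4 * a * s ^ 3 * f ^ 2 - 8 * s ^ 3 * t * f ^ 3 - s ^ 5 * b
              - 2 * s ^ 5 * t ^ 2 * f ^ 2)
            + (2 * f ^ 5 + 4 * a * s ^ 2 * f ^ 3 + 3 * s ^ 4 * f * b + 8 * a * s ^ 4 * t * f ^ 2
              - 2 * s ^ 4 * t ^ 2 * f ^ 3) * ε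
            + (-3 * s ^ 3 * f ^ 2 * b + 8 * a * s ^ 3 * t * f ^ 3
              + 4 * a * s ^ 5 * t ^ 2 * f ^ 2) * ε ^ 2
            + (s ^ 2 * f ^ 3 * b + 4 * a * s ^ 4 * t ^ 2 * f ^ 3) * ε ^ 3))
        / (4 * s ^ 2 * f * (1 + s * ε * t) ^ 2 * (ε * f - s)) := by
  unfold Gfun
  field_simp
  have hD : 2 * s ^ 2 * f * (1 + s * ε * t) ^ 2 * (ε * f - s) ≠ (0:ℂ) :=
    mul_ne_zero (mul_ne_zero (mul_ne_zero (mul_ne_zero two_ne_zero (pow_ne_zero 2 hs)) hf)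
      (pow_ne_zero 2 hx)) hd
  have hD' : 4 * s ^ 2 * f * (1 + s * ε * t) ^ 2 * (ε * f - s) ≠ (0:ℂ) :=
    mul_ne_zero (mul_ne_zero (mul_ne_zero (mul_ne_zero (by norm_num) (pow_ne_zero 2 hs)) hf)
      (pow_ne_zero 2 hx)) hd
  have hd2 : f * ε - s ≠ 0 := by rw [mul_comm]; exact hd
  field_simp
  ring

set_option maxHeartbeats 4000000 in
lemma key_identity (s ε t f g a b : ℂ) (hs : s ≠ 0) (hε : ε ≠ 0) (hf : f ≠ 0)
    (hx : 1 + s * ε * t ≠ 0) (hd : ε * f - s ≠ 0) :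
    2 * s * ε *
      FV (1 + s * ε * t) (ε * f / s) (g / 2) (1 / (2 * ε ^ 4)) (b / 4) (-1 / ε ^ 4)
        (a / ε ^ 2 - 1 / (2 * ε ^ 4)) = Gfun s t f g a b ε := by
  have hp : ε * f ≠ 0 := mul_ne_zero hε hf
  rw [FV_spec s ε t f g a b hs hε hf hx hd, Gfun_eq s ε t f g a b hs hf hx hd]
  have hD2 : 8 * ε ^ 4 * (ε * f) * (ε * f - s) * s ^ 3 * (1 + s * ε * t) ^ 2 ≠ (0:ℂ) :=
    mul_ne_zero (mul_ne_zero (mul_ne_zero (mul_ne_zero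
      (mul_ne_zero (by norm_num) (pow_ne_zero 4 hε)) hp) hd) (pow_ne_zero 3 hs))
      (pow_ne_zero 2 hx)
  have hD3 : 4 * s ^ 2 * f * (1 + s * ε * t) ^ 2 * (ε * f - s) ≠ (0:ℂ) :=
    mul_ne_zero (mul_ne_zero (mul_ne_zero (mul_ne_zero (by norm_num) (pow_ne_zero 2 hs)) hf)
      (pow_ne_zero 2 hx)) hd
  rw [← mul_div_assoc, div_eq_div_iff hD2 hD3]
  ring


/-- Degeneration of Painlevé V to Painlevé IV: for all `t f g a b : ℂ` with `f ≠ 0`,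
the function `ε ↦ 2√2·ε·F_V(1+√2εt, εf/√2, g/2, 1/(2ε⁴), b/4, −1/ε⁴, a/ε² − 1/(2ε⁴))`
tends to `F_IV(t,f,g,a,b)` as `ε → 0` along nonzero complex values. -/
theorem stmt_5 (t f g a b : ℂ) (hf : f ≠ 0) :
    Filter.Tendsto
      (fun ε : ℂ =>
        2 * (Real.sqrt 2 : ℂ) * ε *
          FV (1 + (Real.sqrt 2 : ℂ) * ε * t) (ε * f / (Real.sqrt 2 : ℂ)) (g / 2)
            (1 / (2 * ε ^ 4)) (b / 4) (-1 / ε ^ 4) (a / ε ^ 2 - 1 / (2 * ε ^ 4)))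
      (nhdsWithin 0 {0}ᶜ) (nhds (FIV t f g a b)) := by
  set s : ℂ := (Real.sqrt 2 : ℂ) with hsdef
  have hs : s ≠ 0 := by
    simp only [hsdef, ne_eq, Complex.ofReal_eq_zero]
    positivity
  have hs2 : s ^ 2 = 2 := by
    rw [hsdef, ← Complex.ofReal_pow, Real.sq_sqrt (by norm_num : (2:ℝ) ≥ 0)]
    norm_num
  -- continuity of Gfun at 0
  have hc : ContinuousAt (fun ε => Gfun s t f g a b ε) 0 := by
    unfold Gfun
    apply ContinuousAt.add
    apply ContinuousAt.sub
    apply ContinuousAt.add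
    · exact continuousAt_const
    · exact ContinuousAt.div (by fun_prop) (by fun_prop) (by simp [hs])
    · exact ContinuousAt.div (by fun_prop) (by fun_prop) (by simp)
    · exact ContinuousAt.div (by fun_prop) (by fun_prop) (by simp [hs, hf])
  -- value of Gfun at 0
  have h0 : Gfun s t f g a b 0 = FIV t f g a b := by
    unfold Gfun FIV
    norm_num
    have hs1 : s * s⁻¹ = 1 := mul_inv_cancel₀ hs
    have hf1 : f * f⁻¹ = 1 := mul_inv_cancel₀ hf
    linear_combination ((-2:ℂ)*f^2*a*f⁻¹ + (3:ℂ)*f^4*s⁻¹^2*f⁻¹ + (4:ℂ)*t*f^3*f⁻¹ + (-2:ℂ)*s*f^2*a*s⁻¹*f⁻¹ + (4:ℂ)*s*t*f^3*s⁻¹*f⁻¹ + ((1:ℂ)*s^2*b*f⁻¹)/2 + (-2:ℂ)*s^2*f^2*a*s⁻¹^2*f⁻¹ + (4:ℂ)*s^2*t*f^3*s⁻¹^2*f⁻¹ + (1:ℂ)*s^2*t^2*f^2*f⁻¹ + ((1:ℂ)*s^3*b*s⁻¹*f⁻¹)/2 + (1:ℂ)*s^3*t^2*f^2*s⁻¹*f⁻¹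 + ((1:ℂ)*s^4*b*s⁻¹^2*f⁻¹)/2 + (1:ℂ)*s^4*t^2*f^2*s⁻¹^2*f⁻¹ + (3:ℂ)/2*f^3*(s*s⁻¹+1)) * hs1 + ((-2:ℂ)*f*a + (3:ℂ)*f^3*s⁻¹^2 + (4:ℂ)*t*f^2 + (1:ℂ)*s^2*t^2*f) * hf1
      + (((1:ℂ)*b*f⁻¹)/2 + ((1:ℂ)*g^2*f⁻¹)/4 + (1:ℂ)*t^2*f - (3:ℂ)/2*f^3*s⁻¹^2) * hs2
  have hG : Filter.Tendsto (fun ε => Gfun s t f g a b ε) (nhdsWithin 0 {0}ᶜ)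
      (nhds (FIV t f g a b)) := by
    rw [← h0]
    exact hc.continuousWithinAt.tendsto
  refine hG.congr' ?_
  have hε_ev : ∀ᶠ ε : ℂ in nhdsWithin 0 {0}ᶜ, ε ≠ 0 := eventually_mem_nhdsWithin
  have hx_ev : ∀ᶠ ε : ℂ in nhdsWithin 0 {0}ᶜ, 1 + s * ε * t ≠ 0 := by
    have hT : Filter.Tendsto (fun ε : ℂ => 1 + s * ε * t) (nhdsWithin 0 {0}ᶜ) (nhds 1) := by
      have : Filter.Tendsto (fun ε : ℂ => 1 + s * ε * t) (nhds 0) (nhds (1 + s * 0 * t)) :=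
        (by fun_prop : Continuous fun ε : ℂ => 1 + s * ε * t).tendsto 0
      simpa using this.mono_left nhdsWithin_le_nhds
    exact hT.eventually_ne one_ne_zero
  have hd_ev : ∀ᶠ ε : ℂ in nhdsWithin 0 {0}ᶜ, ε * f - s ≠ 0 := by
    have hT : Filter.Tendsto (fun ε : ℂ => ε * f - s) (nhdsWithin 0 {0}ᶜ) (nhds (-s)) := by
      have : Filter.Tendsto (fun ε : ℂ => ε * f - s) (nhds 0) (nhds (0 * f - s)) :=
        (by fun_prop : Continuous fun ε : ℂ => ε * f - s).tendsto 0
      simpa using this.mono_left nhdsWithin_le_nhds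
    exact hT.eventually_ne (neg_ne_zero.mpr hs)
  filter_upwards [hε_ev, hx_ev, hd_ev] with ε hε hx hd
  exact (key_identity s ε t f g a b hs hε hf hx hd).symm
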